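/- Under the affiliation assumption and equal group proportions, for any k ≥ 1, any bounded measurable g on X^{C(k,2)}, and any label tuple q ∈ {1,...,Q}^k, the conditional expectation m_g(q) = E[g(X^{(1,...,k)}) | Z_1 = q_1, ..., Z_k = q_k] is invariant under the action of any permutation σ of {1,...,Q} applied coordinatewise to q: m_g(σ(q_1),...,σ(q_k)) = m_g(q_1,...,q_k). -/

import Mathlib

open MeasureTheory ProbabilityTheory

/-- Degeneracy lemma, part 2: in the affiliation model with equal group proportions,
the conditional expectation `m_g(q) = E[g(X^{(1,…,k)}) | Z_1 = q_1, …, Z_k = q_k]`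
is invariant under any permutation `σ` of the group labels applied coordinatewise to
`q`: the conditioning events have equal (positive) probability and the corresponding
set integrals of `g(X^{(1,…,k)})` coincide. -/
theorem stmt11 {Ω 𝒳 : Type*} [MeasurableSpace Ω] [MeasurableSpace 𝒳]
    (μ : Measure Ω) [IsProbabilityMeasure μ]
    (Q k : ℕ) (hQ : 0 < Q) (hk : 1 ≤ k)
    (Z : Fin k → Ω → Fin Q) (hZmeas : ∀ i, Measurable (Z i))
    (U : {p : Fin k × Fin k // p.1 < p.2} → Ω → ℝ) (hUmeas : ∀ p, Measurable (U p))
    (F : Bool → ℝ → 𝒳) (hF : Measurable fun x : Bool × ℝ => F x.1 x.2)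
    (hindep : iIndepFun (m := fun _ : Fin k ⊕ {p : Fin k × Fin k // p.1 < p.2} => inferInstance)
      (fun i => Sum.elim (fun j ω => (Z j ω, (0 : ℝ)))
        (fun p ω => ((⟨0, hQ⟩ : Fin Q), U p ω)) i) μ)
    (hZlaw : ∀ i q, μ {ω | Z i ω = q} = (Q : ENNReal)⁻¹)
    (hUlaw : ∀ p, μ.map (U p) = volume.restrict (Set.Icc (0:ℝ) 1))
    (X : {p : Fin k × Fin k // p.1 < p.2} → Ω → 𝒳)
    (hX : ∀ p ω, X p ω = F (decide (Z p.1.1 ω = Z p.1.2 ω)) (U p ω))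
    (g : ({p : Fin k × Fin k // p.1 < p.2} → 𝒳) → ℝ)
    (hgmeas : Measurable g) (hgbdd : ∃ C, ∀ v, |g v| ≤ C)
    (q : Fin k → Fin Q) (σ : Equiv.Perm (Fin Q)) :
    μ {ω | ∀ l, Z l ω = σ (q l)} = μ {ω | ∀ l, Z l ω = q l} ∧
    ∫ ω in {ω | ∀ l, Z l ω = σ (q l)}, g (fun p => X p ω) ∂μ
      = ∫ ω in {ω | ∀ l, Z l ω = q l}, g (fun p => X p ω) ∂μ := by
  classical
  obtain ⟨C, hC⟩ := hgbdd
  set f : Fin k ⊕ {p : Fin k × Fin k // p.1 < p.2} → Ω → Fin Q × ℝ :=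
    fun i => Sum.elim (fun j ω => (Z j ω, (0 : ℝ)))
      (fun p ω => ((⟨0, hQ⟩ : Fin Q), U p ω)) i with hfdef
  have hfmeas : ∀ i, Measurable (f i) := by
    rintro (j | p)
    · exact (hZmeas j).prodMk measurable_const
    · exact measurable_const.prodMk (hUmeas p)
  -- measurability of the conditioning events
  have hEmeas : ∀ c : Fin k → Fin Q, MeasurableSet {ω | ∀ l, Z l ω = c l} := by
    intro c
    have h : {ω | ∀ l, Z l ω = c l} = ⋂ l, (Z l) ⁻¹' {c l} := by
      ext ω; simp [Set.mem_iInter]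
    rw [h]
    exact MeasurableSet.iInter fun l => (hZmeas l) (measurableSet_singleton _)
  -- the conditioning events all have measure Q⁻¹ ^ k
  have keyA : ∀ c : Fin k → Fin Q, μ {ω | ∀ l, Z l ω = c l} = (Q : ENNReal)⁻¹ ^ k := by
    intro c
    set s : Fin k ⊕ {p : Fin k × Fin k // p.1 < p.2} → Set Ω :=
      Sum.elim (fun j => {ω | Z j ω = c j}) (fun _ => Set.univ) with hsdef
    have h1 : μ (⋂ i ∈ (Finset.univ.image Sum.inl :
          Finset (Fin k ⊕ {p : Fin k × Fin k // p.1 < p.2})), s i)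
        = ∏ i ∈ Finset.univ.image Sum.inl, μ (s i) := by
      refine hindep.meas_biInter ?_
      rintro (j | p) hi
      · refine ⟨{c j} ×ˢ Set.univ, (measurableSet_singleton _).prod MeasurableSet.univ, ?_⟩
        ext ω; simp [hsdef, hfdef, eq_comm]
      · exact absurd hi (by simp)
    have h2 : (⋂ i ∈ (Finset.univ.image Sum.inl :
          Finset (Fin k ⊕ {p : Fin k × Fin k // p.1 < p.2})), s i)
        = {ω | ∀ l, Z l ω = c l} := by
      ext ω
      simp [hsdef, Set.mem_iInter]
    have h3 : (∏ i ∈ (Finset.univ.image Sum.inl :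
          Finset (Fin k ⊕ {p : Fin k × Fin k // p.1 < p.2})), μ (s i))
        = ∏ j : Fin k, μ {ω | Z j ω = c j} := by
      rw [Finset.prod_image (fun x _ y _ h => Sum.inl_injective h)]
      rfl
    rw [h2, h3] at h1
    rw [h1]
    simp only [hZlaw]
    simp
  -- independence of the label block and the noise block
  set ZS : Ω → (Fin k → Fin Q) := fun ω l => Z l ω with hZSdef
  set US : Ω → ({p : Fin k × Fin k // p.1 < p.2} → ℝ) := fun ω p => U p ω with hUSdef
  have hZSmeas : Measurable ZS := measurable_pi_lambda _ fun l => hZmeas l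
  have hUSmeas : Measurable US := measurable_pi_lambda _ fun p => hUmeas p
  have hindepZU : IndepFun ZS US μ := by
    have h := hindep.indepFun_finset (Finset.univ.image Sum.inl) (Finset.univ.image Sum.inr)
      (by simp [Finset.disjoint_left]) hfmeas
    have hφ1 : Measurable (fun v : ((i : (Finset.univ.image Sum.inl :
          Finset (Fin k ⊕ {p : Fin k × Fin k // p.1 < p.2}))) → Fin Q × ℝ) =>
        fun l : Fin k => (v ⟨Sum.inl l, by simp⟩).1) :=
      measurable_pi_lambda _ fun l => (measurable_pi_apply _).fst
    have hφ2 : Measurable (fun v : ((i : (Finset.univ.image Sum.inr :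
          Finset (Fin k ⊕ {p : Fin k × Fin k // p.1 < p.2}))) → Fin Q × ℝ) =>
        fun p : {p : Fin k × Fin k // p.1 < p.2} => (v ⟨Sum.inr p, by simp⟩).2) :=
      measurable_pi_lambda _ fun p => (measurable_pi_apply _).snd
    exact h.comp hφ1 hφ2
  -- the key computation of set integrals via independence
  have keyB : ∀ (b : {p : Fin k × Fin k // p.1 < p.2} → Bool) (c : Fin k → Fin Q),
      ∫ ω in {ω | ∀ l, Z l ω = c l}, g (fun p => F (b p) (U p ω)) ∂μ
        = (μ {ω | ∀ l, Z l ω = c l}).toReal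
          * ∫ ω, g (fun p => F (b p) (U p ω)) ∂μ := by
    intro b c
    set h' : ({p : Fin k × Fin k // p.1 < p.2} → ℝ) → ℝ :=
      fun u => g (fun p => F (b p) (u p)) with hh'def
    have hh'meas : Measurable h' := by
      apply hgmeas.comp
      apply measurable_pi_lambda
      intro p
      exact (hF.comp (measurable_const.prodMk measurable_id)).comp (measurable_pi_apply p)
    set s : Set (Fin k → Fin Q) := {v | ∀ l, v l = c l} with hsdef
    have hsmeas : MeasurableSet s := by
      have h : s = ⋂ l, (fun v : Fin k → Fin Q => v l) ⁻¹' {c l} := by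
        ext v; simp [hsdef, Set.mem_iInter]
      rw [h]
      exact MeasurableSet.iInter fun l => (measurable_pi_apply l) (measurableSet_singleton _)
    have hA : {ω | ∀ l, Z l ω = c l} = ZS ⁻¹' s := rfl
    have hind : IndepFun (fun ω => s.indicator (fun _ => (1:ℝ)) (ZS ω))
        (fun ω => h' (US ω)) μ :=
      hindepZU.comp (measurable_const.indicator hsmeas) hh'meas
    have hint2 : Integrable (fun ω => h' (US ω)) μ := by
      refine Integrable.mono' (integrable_const C)
        ((hh'meas.comp hUSmeas).aestronglyMeasurable) ?_
      filter_upwards with ω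
      simpa using hC _
    have hind1eq : (fun ω => s.indicator (fun _ => (1:ℝ)) (ZS ω))
        = Set.indicator {ω | ∀ l, Z l ω = c l} (fun _ => (1:ℝ)) := by
      funext ω
      by_cases hω : ZS ω ∈ s
      · rw [Set.indicator_of_mem hω, Set.indicator_of_mem (by exact hω)]
      · rw [Set.indicator_of_notMem hω, Set.indicator_of_notMem (by exact hω)]
    have hint1 : Integrable (fun ω => s.indicator (fun _ => (1:ℝ)) (ZS ω)) μ := by
      rw [hind1eq]
      exact (integrable_const (1:ℝ)).indicator (hEmeas c)
    have hmul := hind.integral_mul_eq_mul_integral hint1.aestronglyMeasurable hint2.aestronglyMeasurable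
    have hprod : (fun ω => s.indicator (fun _ => (1:ℝ)) (ZS ω)) * (fun ω => h' (US ω))
        = Set.indicator {ω | ∀ l, Z l ω = c l} (fun ω => h' (US ω)) := by
      funext ω
      by_cases hω : ZS ω ∈ s
      · simp only [Pi.mul_apply, Set.indicator_of_mem hω,
          Set.indicator_of_mem (show ω ∈ {ω | ∀ l, Z l ω = c l} from hω), one_mul]
      · simp only [Pi.mul_apply, Set.indicator_of_notMem hω,
          Set.indicator_of_notMem (show ω ∉ {ω | ∀ l, Z l ω = c l} from hω), zero_mul]
    rw [hprod] at hmul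
    rw [hind1eq] at hmul
    rw [integral_indicator (hEmeas c), integral_indicator_const (1:ℝ) (hEmeas c)] at hmul
    calc ∫ ω in {ω | ∀ l, Z l ω = c l}, g (fun p => F (b p) (U p ω)) ∂μ
        = ∫ ω in {ω | ∀ l, Z l ω = c l}, h' (US ω) ∂μ := rfl
      _ = (μ {ω | ∀ l, Z l ω = c l}).toReal * ∫ ω, h' (US ω) ∂μ := by
          rw [hmul]; simp [smul_eq_mul, Measure.real]
      _ = (μ {ω | ∀ l, Z l ω = c l}).toReal * ∫ ω, g (fun p => F (b p) (U p ω)) ∂μ := rfl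
  -- equality of measures
  have hmeq : μ {ω | ∀ l, Z l ω = σ (q l)} = μ {ω | ∀ l, Z l ω = q l} := by
    rw [keyA (fun l => σ (q l)), keyA q]
  refine ⟨hmeq, ?_⟩
  set b : {p : Fin k × Fin k // p.1 < p.2} → Bool :=
    fun p => decide (q p.1.1 = q p.1.2) with hbdef
  -- integrand equality on each event
  have heq1 : ∫ ω in {ω | ∀ l, Z l ω = σ (q l)}, g (fun p => X p ω) ∂μ
      = ∫ ω in {ω | ∀ l, Z l ω = σ (q l)}, g (fun p => F (b p) (U p ω)) ∂μ := by
    refine setIntegral_congr_fun (hEmeas _) ?_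
    intro ω hω
    simp only [Set.mem_setOf_eq] at hω
    show g (fun p => X p ω) = g (fun p => F (b p) (U p ω))
    congr 1
    funext p
    rw [hX p ω, hω p.1.1, hω p.1.2, hbdef]
    congr 1
    simp [σ.injective.eq_iff]
  have heq2 : ∫ ω in {ω | ∀ l, Z l ω = q l}, g (fun p => X p ω) ∂μ
      = ∫ ω in {ω | ∀ l, Z l ω = q l}, g (fun p => F (b p) (U p ω)) ∂μ := by
    refine setIntegral_congr_fun (hEmeas _) ?_
    intro ω hω
    simp only [Set.mem_setOf_eq] at hω
    show g (fun p => X p ω) = g (fun p => F (b p) (U p ω))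
    congr 1
    funext p
    rw [hX p ω, hω p.1.1, hω p.1.2, hbdef]
  rw [heq1, heq2, keyB b (fun l => σ (q l)), keyB b q, hmeq]
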